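/- If X is a normal n×n complex matrix and [[A, X],[X*, B]] is positive semidefinite, then Tr(X*X) ≤ Tr(AB). -/

import Mathlib

open scoped Matrix ComplexOrder

noncomputable section

/-- The numerical range of a matrix. -/
def numRange {m : Type*} [Fintype m] (X : Matrix m m ℂ) : Set ℂ :=
  {z | ∃ v : m → ℂ, star v ⬝ᵥ v = 1 ∧ z = star v ⬝ᵥ X.mulVec v}

/-- The inradius of a subset of the plane: the radius of the largest disc it contains. -/
def inRad (S : Set ℂ) : ℝ := sSup {r : ℝ | ∃ c : ℂ, Metric.closedBall c r ⊆ S}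

/-- The indiameter: the diameter of the largest disc contained in the set. -/
def inDiam (S : Set ℂ) : ℝ := 2 * inRad S

/-- The numerical range of the compression of `X` to the subspace `S`. -/
def nrOn {m : Type*} [Fintype m] (X : Matrix m m ℂ) (S : Submodule ℂ (m → ℂ)) : Set ℂ :=
  {z | ∃ v ∈ S, star v ⬝ᵥ v = 1 ∧ z = star v ⬝ᵥ X.mulVec v}

/-- The elliptical width `δ₂(X)`: the supremum of the indiameters of the numerical
ranges of compressions of `X` to two-dimensional subspaces. -/
def ellWidth {m : Type*} [Fintype m] (X : Matrix m m ℂ) : ℝ :=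
  sSup {d | ∃ S : Submodule ℂ (m → ℂ), Module.finrank ℂ S = 2 ∧ d = inDiam (nrOn X S)}

/-- The operator (spectral) norm of a matrix. -/
def opNorm {m : Type*} [Fintype m] [DecidableEq m] (M : Matrix m m ℂ) : ℝ :=
  ‖Matrix.toEuclideanCLM (𝕜 := ℂ) M‖

/-- The Frobenius (Hilbert–Schmidt) norm of a matrix. -/
def frobNorm {m : Type*} [Fintype m] (M : Matrix m m ℂ) : ℝ :=
  Real.sqrt ((Matrix.trace (Mᴴ * M)).re)

/-- Eigenvalues of a Hermitian matrix in decreasing order (junk value `0` otherwise):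
`eigDesc M k` is the `(k+1)`-th largest eigenvalue of `M`. -/
def eigDesc {m : ℕ} (M : Matrix (Fin m) (Fin m) ℂ) (k : Fin m) : ℝ :=
  if h : M.IsHermitian then (h.eigenvalues ∘ Tuple.sort h.eigenvalues) k.rev else 0

/-- The absolute value `|X| = (XᴴX)^(1/2)` of a matrix. -/
def matAbs {m : Type*} [Fintype m] [DecidableEq m] (X : Matrix m m ℂ) : Matrix m m ℂ :=
  (Matrix.posSemidef_conjTranspose_mul_self X).1.eigenvectorUnitary.1 *
    Matrix.diagonal ((↑) ∘ (√·) ∘ (Matrix.posSemidef_conjTranspose_mul_self X).1.eigenvalues) *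
    (star (Matrix.posSemidef_conjTranspose_mul_self X).1.eigenvectorUnitary : Matrix m m ℂ)

/-- The `2n × 2n` block matrix `[[A, X],[Xᴴ, B]]`, reindexed by `Fin (n+n)`. -/
def blockR {n : ℕ} (A X B : Matrix (Fin n) (Fin n) ℂ) :
    Matrix (Fin (n + n)) (Fin (n + n)) ℂ :=
  (Matrix.fromBlocks A X Xᴴ B).submatrix finSumFinEquiv.symm finSumFinEquiv.symm

/-- The operator norm distance from `X` to the scalar matrices. -/
def distScalar {m : Type*} [Fintype m] [DecidableEq m] (X : Matrix m m ℂ) : ℝ :=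
  ⨅ a : ℂ, opNorm (X - a • 1)

/-- Apply a real function to a Hermitian matrix by the functional calculus
(junk value `0` if the matrix is not Hermitian). -/
def hermApply {m : Type*} [Fintype m] [DecidableEq m] (f : ℝ → ℝ) (M : Matrix m m ℂ) :
    Matrix m m ℂ :=
  if h : M.IsHermitian then h.cfc f else 0

end
namespace Stmt11Aux

open Matrix Polynomial Complex Finset


/-- Characteristic polynomial is invariant under conjugation. -/
lemma charpoly_conj {m : Type*} [Fintype m] [DecidableEq m] (P Q M : Matrix m m ℂ)
    (hPQ : P * Q = 1) : (P * M * Q).charpoly = M.charpoly := by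
  have h1 : (P.map (C : ℂ →+* ℂ[X])) * (Q.map (C : ℂ →+* ℂ[X])) = 1 := by
    rw [← Matrix.map_mul, hPQ]
    ext i j
    simp [Matrix.one_apply, apply_ite (C : ℂ →+* ℂ[X])]
  have hcm : charmatrix (P * M * Q) =
      P.map (C : ℂ →+* ℂ[X]) * charmatrix M * Q.map (C : ℂ →+* ℂ[X]) := by
    unfold charmatrix
    rw [Matrix.mul_sub, Matrix.sub_mul]
    congr 1
    · have hc : Commute (scalar m (X : ℂ[X])) (Q.map (C : ℂ →+* ℂ[X])) :=
        (Matrix.scalar_commute (X : ℂ[X]) (fun r => Commute.all _ _) _)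
      rw [Matrix.mul_assoc, hc.eq, ← Matrix.mul_assoc, h1, Matrix.one_mul]
    · simp only [RingHom.mapMatrix_apply]
      rw [← Matrix.map_mul, ← Matrix.map_mul]
  rw [Matrix.charpoly, Matrix.charpoly, hcm, Matrix.det_mul, Matrix.det_mul]
  have : (P.map (C : ℂ →+* ℂ[X])).det * (Q.map (C : ℂ →+* ℂ[X])).det = 1 := by
    rw [← Matrix.det_mul, h1, Matrix.det_one]
  calc (P.map (C : ℂ →+* ℂ[X])).det * (charmatrix M).det * (Q.map (C : ℂ →+* ℂ[X])).det
      = (charmatrix M).det * ((P.map (C : ℂ →+* ℂ[X])).det * (Q.map (C : ℂ →+* ℂ[X])).det) := by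
        ring
    _ = (charmatrix M).det := by rw [this, mul_one]



lemma schur_tri : ∀ (n : ℕ) (M : Matrix (Fin n) (Fin n) ℂ),
    ∃ U : Matrix (Fin n) (Fin n) ℂ, Uᴴ * U = 1 ∧
      (Uᴴ * M * U).BlockTriangular (id : Fin n → Fin n) := by
  intro n
  induction n with
  | zero =>
    intro M
    exact ⟨1, Subsingleton.elim _ _, fun i _ _ => i.elim0⟩
  | succ n ih =>
    intro M
    -- eigenvector
    let f : Module.End ℂ (EuclideanSpace ℂ (Fin (n + 1))) := Matrix.toEuclideanLin M
    obtain ⟨μ, hμ⟩ := Module.End.exists_eigenvalue f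
    obtain ⟨v, hv⟩ := hμ.exists_hasEigenvector
    set w : EuclideanSpace ℂ (Fin (n + 1)) := (‖v‖⁻¹ : ℂ) • v with hwdef
    have hwnorm : ‖w‖ = 1 := norm_smul_inv_norm hv.2
    have hfw : f w = μ • w := by
      rw [hwdef, _root_.map_smul, hv.apply_eq_smul, smul_comm]
    have hcard : Module.finrank ℂ (EuclideanSpace ℂ (Fin (n + 1)))
        = Fintype.card (Fin (n + 1)) := by
      simp [finrank_euclideanSpace]
    have horth : Orthonormal ℂ
        (({0} : Set (Fin (n + 1))).restrict (fun _ => w)) := by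
      constructor
      · intro i; exact hwnorm
      · intro i j hij; exact absurd (Subsingleton.elim i j) hij
    obtain ⟨b, hb⟩ := horth.exists_orthonormalBasis_extension_of_card_eq hcard
    have hb0 : b 0 = w := hb 0 rfl
    -- the unitary with columns b j
    set U : Matrix (Fin (n + 1)) (Fin (n + 1)) ℂ := Matrix.of fun i j => b j i with hUdef
    have hinner : ∀ i j, ∑ k, (starRingEnd ℂ) (b i k) * b j k = if i = j then 1 else 0 := by
      intro i j
      have := orthonormal_iff_ite.mp b.orthonormal i j
      rw [PiLp.inner_apply] at this
      simpa [RCLike.inner_apply, mul_comm] using this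
    have hU : Uᴴ * U = 1 := by
      ext i j
      rw [Matrix.mul_apply, Matrix.one_apply]
      simpa [hUdef, Matrix.conjTranspose_apply] using hinner i j
    set T := Uᴴ * M * U with hTdef
    have hcol : ∀ i, T i 0 = if i = 0 then (μ : ℂ) else 0 := by
      intro i
      have hMU : ∀ k, (M * U) k 0 = μ * b 0 k := by
        intro k
        have h1 : (M * U) k 0 = (M *ᵥ (WithLp.equiv 2 _ w)) k := by
          simp [hUdef, Matrix.mul_apply, Matrix.mulVec, dotProduct, hb0]
        have h2 : (M *ᵥ (WithLp.equiv 2 _ w)) k = (f w) k := rfl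
        rw [h1, h2, hfw, hb0]
        rfl
      have : T i 0 = ∑ k, (starRingEnd ℂ) (b i k) * (μ * b 0 k) := by
        rw [hTdef, Matrix.mul_assoc, Matrix.mul_apply]
        congr 1; ext k
        rw [hMU k]
        simp [hUdef, Matrix.conjTranspose_apply]
      rw [this]
      have : ∑ k, (starRingEnd ℂ) (b i k) * (μ * b 0 k)
          = μ * ∑ k, (starRingEnd ℂ) (b i k) * b 0 k := by
        rw [Finset.mul_sum]; congr 1; ext k; ring
      rw [this, hinner i 0]
      split <;> simp
    -- recurse
    set M' : Matrix (Fin n) (Fin n) ℂ := Matrix.of fun i j => T i.succ j.succ with hM'def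
    obtain ⟨V, hV, hVtri⟩ := ih M'
    set W : Matrix (Fin (n + 1)) (Fin (n + 1)) ℂ :=
      Matrix.of (Fin.cons (Fin.cons 1 (fun _ => 0))
        (fun i' => Fin.cons 0 (fun j' => V i' j'))) with hWdef
    have hW00 : W 0 0 = (1 : ℂ) := by simp [hWdef]
    have hW0s : ∀ j : Fin n, W 0 j.succ = (0:ℂ) := by intro j; simp [hWdef]
    have hWs0 : ∀ i : Fin n, W i.succ 0 = (0:ℂ) := by intro i; simp [hWdef]
    have hWss : ∀ i j : Fin n, W i.succ j.succ = V i j := by intro i j; simp [hWdef]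
    have hWunit : Wᴴ * W = 1 := by
      ext i j
      rw [Matrix.mul_apply]
      simp only [Matrix.conjTranspose_apply]
      rw [Fin.sum_univ_succ]
      induction i using Fin.cases with
      | zero =>
        induction j using Fin.cases with
        | zero => simp [hW00, hW0s, hWs0, hWss]
        | succ j' => simp [hW00, hW0s, hWs0, hWss, Matrix.one_apply, (Fin.succ_ne_zero j').symm]
      | succ i' =>
        induction j using Fin.cases with
        | zero => simp [hW00, hW0s, hWs0, hWss, Matrix.one_apply, Fin.succ_ne_zero i']
        | succ j' =>
          have := congrFun (congrFun hV i') j'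
          rw [Matrix.mul_apply] at this
          simp only [Matrix.conjTranspose_apply] at this
          simp only [hW0s, hWss, map_zero, zero_mul, zero_add, this, Matrix.one_apply,
            Fin.succ_inj]
          simp
    -- entries of the conjugated matrix
    have hTW : ∀ (k : Fin (n+1)) (j : Fin n), (T * W) k j.succ = ∑ l, T k l.succ * V l j := by
      intro k j
      rw [Matrix.mul_apply, Fin.sum_univ_succ, hW0s, mul_zero, zero_add]
      exact Finset.sum_congr rfl fun l _ => by rw [hWss]
    have hred : ∀ i j : Fin n, (Wᴴ * T * W) i.succ j.succ = (Vᴴ * M' * V) i j := by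
      intro i j
      rw [Matrix.mul_assoc Wᴴ T W, Matrix.mul_apply, Fin.sum_univ_succ]
      have h0 : (Wᴴ) i.succ 0 = 0 := by
        rw [Matrix.conjTranspose_apply, hW0s]; simp
      rw [h0, zero_mul, zero_add, Matrix.mul_assoc Vᴴ M' V, Matrix.mul_apply]
      refine Finset.sum_congr rfl fun k _ => ?_
      rw [hTW k.succ j, Matrix.conjTranspose_apply, hWss, Matrix.conjTranspose_apply]
      have hMV : (M' * V) k j = ∑ l, T k.succ l.succ * V l j := by
        rw [Matrix.mul_apply]
        exact Finset.sum_congr rfl fun l _ => by rw [hM'def]; rfl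
      rw [hMV]
    have hcol0 : ∀ i : Fin n, (Wᴴ * T * W) i.succ 0 = 0 := by
      intro i
      rw [Matrix.mul_assoc Wᴴ T W, Matrix.mul_apply]
      have hTW0 : ∀ k, (T * W) k 0 = T k 0 := by
        intro k
        rw [Matrix.mul_apply, Fin.sum_univ_succ, hW00, mul_one]
        simp [hWs0]
      rw [Fin.sum_univ_succ]
      simp only [Matrix.conjTranspose_apply, hTW0]
      simp [hW0s, hcol, Fin.succ_ne_zero]
    refine ⟨U * W, ?_, ?_⟩
    · rw [Matrix.conjTranspose_mul, Matrix.mul_assoc, ← Matrix.mul_assoc Uᴴ U W, hU,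
        Matrix.one_mul, hWunit]
    · have heq : (U * W)ᴴ * M * (U * W) = Wᴴ * T * W := by
        rw [hTdef, Matrix.conjTranspose_mul]
        simp only [Matrix.mul_assoc]
      rw [heq]
      intro i j hij
      induction j using Fin.cases with
      | zero =>
        obtain ⟨i', rfl⟩ := Fin.exists_succ_eq_of_ne_zero (Fin.pos_iff_ne_zero.mp hij)
        exact hcol0 i'
      | succ j' =>
        have hine : i ≠ 0 := by
          intro h
          rw [h] at hij
          exact absurd hij (by simp [Fin.succ_ne_zero])
        obtain ⟨i', rfl⟩ := Fin.exists_succ_eq_of_ne_zero hine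
        rw [hred i' j']
        exact hVtri (by simpa [Fin.succ_lt_succ_iff] using hij)



variable {n : ℕ}

lemma tri_normal_diag {T : Matrix (Fin n) (Fin n) ℂ}
    (hT : T.BlockTriangular (id : Fin n → Fin n)) (hN : T * Tᴴ = Tᴴ * T) :
    ∀ i j, i ≠ j → T i j = 0 := by
  have main : ∀ m : ℕ, ∀ i : Fin n, (i : ℕ) = m → ∀ j, i < j → T i j = 0 := by
    intro m
    induction m using Nat.strong_induction_on with
    | _ m ihm =>
      intro i him j hij
      have hrow : ∀ k : Fin n, k < i → ∀ j', k ≠ j' → T k j' = 0 := by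
        intro k hk j' hkj'
        rcases lt_or_gt_of_ne hkj' with h | h
        · exact ihm (k : ℕ) (him ▸ hk) k rfl j' h
        · exact hT h
      have e1 : (Tᴴ * T) i i = (starRingEnd ℂ) (T i i) * T i i := by
        rw [Matrix.mul_apply]
        rw [Finset.sum_eq_single i]
        · rw [Matrix.conjTranspose_apply]; rfl
        · intro k _ hki
          rw [Matrix.conjTranspose_apply]
          rcases lt_or_gt_of_ne hki with h | h
          · rw [hrow k h i hki]; simp
          · rw [hT h]; simp
        · intro h; exact absurd (Finset.mem_univ i) h
      have e2 : (T * Tᴴ) i i = ∑ k, T i k * (starRingEnd ℂ) (T i k) := by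
        rw [Matrix.mul_apply]
        exact Finset.sum_congr rfl fun k _ => by rw [Matrix.conjTranspose_apply]; rfl
      have e3 : ∑ k, Complex.normSq (T i k) = Complex.normSq (T i i) := by
        have := congrFun (congrFun hN i) i
        rw [e1, e2] at this
        have h4 : ((∑ k, Complex.normSq (T i k) : ℝ) : ℂ)
            = ((Complex.normSq (T i i) : ℝ) : ℂ) := by
          push_cast
          calc (∑ k, (Complex.normSq (T i k) : ℂ))
              = ∑ k, T i k * (starRingEnd ℂ) (T i k) :=
                Finset.sum_congr rfl fun k _ => (Complex.mul_conj (T i k)).symm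
            _ = (starRingEnd ℂ) (T i i) * T i i := this
            _ = (Complex.normSq (T i i) : ℂ) := by rw [mul_comm, Complex.mul_conj]
        exact_mod_cast h4
      have e5 : ∑ k ∈ Finset.univ.erase i, Complex.normSq (T i k) = 0 := by
        have := Finset.add_sum_erase Finset.univ (fun k => Complex.normSq (T i k))
          (Finset.mem_univ i)
        rw [e3] at this
        linarith
      have e6 := (Finset.sum_eq_zero_iff_of_nonneg
        (fun k _ => Complex.normSq_nonneg (T i k))).mp e5
      exact Complex.normSq_eq_zero.mp
        (e6 j (Finset.mem_erase.mpr ⟨hij.ne', Finset.mem_univ j⟩))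
  intro i j hij
  rcases lt_or_gt_of_ne hij with h | h
  · exact main (i : ℕ) i rfl j h
  · exact hT h


lemma trace_hermsq_re (T : Matrix (Fin n) (Fin n) ℂ) :
    (Matrix.trace (Tᴴ * T)).re = ∑ i, ∑ k, Complex.normSq (T k i) := by
  have h1 : Matrix.trace (Tᴴ * T) = ∑ i, ∑ k, ((Complex.normSq (T k i) : ℝ) : ℂ) := by
    rw [Matrix.trace]
    refine Finset.sum_congr rfl fun i _ => ?_
    rw [Matrix.diag, Matrix.mul_apply]
    refine Finset.sum_congr rfl fun k _ => ?_
    rw [Matrix.conjTranspose_apply]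
    rw [Complex.normSq_eq_conj_mul_self]
    rfl
  rw [h1, Complex.re_sum]
  refine Finset.sum_congr rfl fun i _ => ?_
  rw [Complex.re_sum]
  simp

/-- The key inequality: if `N` is normal and has the same characteristic polynomial as `M`,
then `tr(NᴴN) ≤ tr(MᴴM)`. -/
lemma key_ineq (N M : Matrix (Fin n) (Fin n) ℂ) (hNn : N * Nᴴ = Nᴴ * N)
    (hchar : N.charpoly = M.charpoly) :
    (Matrix.trace (Nᴴ * N)).re ≤ (Matrix.trace (Mᴴ * M)).re := by
  obtain ⟨U, hU, hUtri⟩ := schur_tri n N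
  obtain ⟨V, hV, hVtri⟩ := schur_tri n M
  have hUU : U * Uᴴ = 1 := mul_eq_one_comm.mp hU
  have hVV : V * Vᴴ = 1 := mul_eq_one_comm.mp hV
  set T := Uᴴ * N * U with hTdef
  set S := Vᴴ * M * V with hSdef
  -- trace transfers
  have hTc : Tᴴ = Uᴴ * Nᴴ * U := by
    rw [hTdef]
    rw [Matrix.conjTranspose_mul, Matrix.conjTranspose_mul, Matrix.conjTranspose_conjTranspose,
      Matrix.mul_assoc]
  have hTT : Tᴴ * T = Uᴴ * (Nᴴ * N) * U := by
    rw [hTc, hTdef]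
    calc Uᴴ * Nᴴ * U * (Uᴴ * N * U) = Uᴴ * Nᴴ * (U * Uᴴ) * (N * U) := by
          simp only [Matrix.mul_assoc]
      _ = Uᴴ * (Nᴴ * N) * U := by rw [hUU, Matrix.mul_one]; simp only [Matrix.mul_assoc]
  have hTT' : T * Tᴴ = Uᴴ * (N * Nᴴ) * U := by
    rw [hTc, hTdef]
    calc Uᴴ * N * U * (Uᴴ * Nᴴ * U) = Uᴴ * N * (U * Uᴴ) * (Nᴴ * U) := by
          simp only [Matrix.mul_assoc]
      _ = Uᴴ * (N * Nᴴ) * U := by rw [hUU, Matrix.mul_one]; simp only [Matrix.mul_assoc]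
  have hTn : T * Tᴴ = Tᴴ * T := by rw [hTT, hTT', hNn]
  have hSc : Sᴴ = Vᴴ * Mᴴ * V := by
    rw [hSdef, Matrix.conjTranspose_mul, Matrix.conjTranspose_mul,
      Matrix.conjTranspose_conjTranspose, Matrix.mul_assoc]
  have hSS : Sᴴ * S = Vᴴ * (Mᴴ * M) * V := by
    rw [hSc, hSdef]
    calc Vᴴ * Mᴴ * V * (Vᴴ * M * V) = Vᴴ * Mᴴ * (V * Vᴴ) * (M * V) := by
          simp only [Matrix.mul_assoc]
      _ = Vᴴ * (Mᴴ * M) * V := by rw [hVV, Matrix.mul_one]; simp only [Matrix.mul_assoc]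
  have htrN : Matrix.trace (Nᴴ * N) = Matrix.trace (Tᴴ * T) := by
    rw [hTT, Matrix.trace_mul_cycle, ← Matrix.mul_assoc, hUU, Matrix.one_mul]
  have htrM : Matrix.trace (Mᴴ * M) = Matrix.trace (Sᴴ * S) := by
    rw [hSS, Matrix.trace_mul_cycle, ← Matrix.mul_assoc, hVV, Matrix.one_mul]
  -- diagonal multiset equality via charpoly
  have hTchar : N.charpoly = T.charpoly := (charpoly_conj Uᴴ U N hU).symm
  have hSchar : M.charpoly = S.charpoly := (charpoly_conj Vᴴ V M hV).symm
  have hprod : (∏ i, (X - C (T i i))) = ∏ i, (X - C (S i i)) := by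
    rw [← Matrix.charpoly_of_upperTriangular T hUtri,
      ← Matrix.charpoly_of_upperTriangular S hVtri, ← hTchar, ← hSchar, hchar]
  have hmult : (Finset.univ.val.map fun i => T i i)
      = (Finset.univ.val.map fun i => S i i) := by
    have h1 : ((Finset.univ.val.map fun i => T i i).map fun a => X - C a).prod
        = ((Finset.univ.val.map fun i => S i i).map fun a => X - C a).prod := by
      rw [Multiset.map_map, Multiset.map_map]
      rw [← Finset.prod_eq_multiset_prod, ← Finset.prod_eq_multiset_prod]
      exact hprod
    calc (Finset.univ.val.map fun i => T i i)
        = (((Finset.univ.val.map fun i => T i i).map fun a => X - C a).prod).roots := by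
          rw [Polynomial.roots_multiset_prod_X_sub_C]
      _ = (((Finset.univ.val.map fun i => S i i).map fun a => X - C a).prod).roots := by
          rw [h1]
      _ = (Finset.univ.val.map fun i => S i i) := by
          rw [Polynomial.roots_multiset_prod_X_sub_C]
  have hsumdiag : ∑ i, Complex.normSq (T i i) = ∑ i, Complex.normSq (S i i) := by
    have h2 := congrArg (fun s : Multiset ℂ => ((s.map Complex.normSq).sum : ℝ)) hmult
    simp only [Multiset.map_map] at h2
    rw [Finset.sum_eq_multiset_sum, Finset.sum_eq_multiset_sum]
    exact h2
  -- conclude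
  have hdiagT := tri_normal_diag hUtri hTn
  have hleft : (Matrix.trace (Nᴴ * N)).re = ∑ i, Complex.normSq (T i i) := by
    rw [htrN, trace_hermsq_re]
    refine Finset.sum_congr rfl fun i _ => ?_
    refine Finset.sum_eq_single i (fun k _ hki => by rw [hdiagT k i hki]; simp)
      (fun h => absurd (Finset.mem_univ i) h)
  have hright : ∑ i, Complex.normSq (S i i) ≤ (Matrix.trace (Mᴴ * M)).re := by
    rw [htrM, trace_hermsq_re]
    refine Finset.sum_le_sum fun i _ => ?_
    exact Finset.single_le_sum (fun k _ => Complex.normSq_nonneg (S k i)) (Finset.mem_univ i)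
  rw [hleft, hsumdiag]
  exact hright

lemma trace_re_nonneg {m : Type*} [Fintype m] [DecidableEq m] {M : Matrix m m ℂ}
    (h : M.PosSemidef) : 0 ≤ (Matrix.trace M).re := by
  rw [Matrix.trace, Complex.re_sum]
  refine Finset.sum_nonneg fun i _ => ?_
  have h2 := h.diag_nonneg (i := i)
  exact (Complex.le_def.mp h2).1

section
open scoped MatrixOrder
noncomputable def psdSqrt {m : Type*} [Fintype m] [DecidableEq m] {P : Matrix m m ℂ} (_hP : P.PosSemidef) :
    Matrix m m ℂ := CFC.sqrt P
lemma psdSqrt_mul_self {m : Type*} [Fintype m] [DecidableEq m] {P : Matrix m m ℂ}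
    (hP : P.PosSemidef) : psdSqrt hP * psdSqrt hP = P :=
  CFC.sqrt_mul_sqrt_self P (Matrix.nonneg_iff_posSemidef.mpr hP)
lemma posSemidef_psdSqrt {m : Type*} [Fintype m] [DecidableEq m] {P : Matrix m m ℂ}
    (hP : P.PosSemidef) : (psdSqrt hP).PosSemidef :=
  Matrix.nonneg_iff_posSemidef.mp (CFC.sqrt_nonneg P)
end

lemma trace_mul_psd_nonneg {m : Type*} [Fintype m] [DecidableEq m] {P Q : Matrix m m ℂ}
    (hP : P.PosSemidef) (hQ : Q.PosSemidef) : 0 ≤ (Matrix.trace (P * Q)).re := by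
  set s := psdSqrt hP with hsdef
  have hsym : sᴴ = s := (posSemidef_psdSqrt hP).1
  have h1 : Matrix.trace (P * Q) = Matrix.trace (s * Q * s) := by
    rw [← psdSqrt_mul_self hP, ← hsdef, Matrix.mul_assoc s s Q, Matrix.trace_mul_comm]
  rw [h1]
  refine trace_re_nonneg ?_
  have := hQ.conjTranspose_mul_mul_same s
  rwa [hsym] at this

lemma smul_one_posDef {m : Type*} [Fintype m] [DecidableEq m] {ε : ℝ} (hε : 0 < ε) :
    ((ε : ℂ) • (1 : Matrix m m ℂ)).PosDef := by
  have h : (ε : ℂ) • (1 : Matrix m m ℂ) = Matrix.diagonal (fun _ => (ε : ℂ)) := by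
    ext i j
    by_cases hij : i = j <;> simp [Matrix.one_apply, Matrix.diagonal_apply, hij]
  rw [h]
  exact Matrix.PosDef.diagonal fun i => Complex.zero_lt_real.mpr hε

end Stmt11Aux

open Stmt11Aux

/-- If `X` is normal and `[[A,X],[Xᴴ,B]]` is positive semidefinite, then
`Tr(XᴴX) ≤ Tr(AB)`. -/
theorem stmt11 {n : ℕ} (A B X : Matrix (Fin n) (Fin n) ℂ)
    (hP : (Matrix.fromBlocks A X Xᴴ B).PosSemidef)
    (hX : X * Xᴴ = Xᴴ * X) :
    (Matrix.trace (Xᴴ * X)).re ≤ (Matrix.trace (A * B)).re := by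
  classical
  have hA : A.PosSemidef := by
    have h := hP.submatrix (Sum.inl : Fin n → Fin n ⊕ Fin n)
    have he : (Matrix.fromBlocks A X Xᴴ B).submatrix Sum.inl Sum.inl = A := rfl
    rwa [he] at h
  have hB : B.PosSemidef := by
    have h := hP.submatrix (Sum.inr : Fin n → Fin n ⊕ Fin n)
    have he : (Matrix.fromBlocks A X Xᴴ B).submatrix Sum.inr Sum.inr = B := rfl
    rwa [he] at h
  set L := (Matrix.trace (Xᴴ * X)).re with hLdef
  have key : ∀ ε : ℝ, 0 < ε →
      L ≤ (Matrix.trace (A * B)).re + ε * ((Matrix.trace A).re + (Matrix.trace B).re)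
        + ε ^ 2 * n := by
    intro ε hε
    set Aε := A + (ε : ℂ) • 1 with hAεdef
    set Bε := B + (ε : ℂ) • 1 with hBεdef
    have hAε : Aε.PosDef := Matrix.PosDef.posSemidef_add hA (smul_one_posDef hε)
    have hBε : Bε.PosDef := Matrix.PosDef.posSemidef_add hB (smul_one_posDef hε)
    have hPε : (Matrix.fromBlocks Aε X Xᴴ Bε).PosSemidef := by
      have h1 : Matrix.fromBlocks Aε X Xᴴ Bε
          = Matrix.fromBlocks A X Xᴴ B + (ε : ℂ) • 1 := by
        rw [hAεdef, hBεdef, ← Matrix.fromBlocks_one, Matrix.fromBlocks_smul,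
          Matrix.fromBlocks_add]
        simp
      rw [h1]
      exact hP.add (smul_one_posDef hε).posSemidef
    haveI := hBε.isUnit.invertible
    have hSchur : (Aε - X * Bε⁻¹ * Xᴴ).PosSemidef :=
      (Matrix.PosDef.fromBlocks₂₂ Aε X hBε).mp hPε
    set Q := psdSqrt hAε.posSemidef with hQdef
    set R := psdSqrt hBε.posSemidef with hRdef
    have hQQ : Q * Q = Aε := psdSqrt_mul_self hAε.posSemidef
    have hRR : R * R = Bε := psdSqrt_mul_self hBε.posSemidef
    have hQh : Qᴴ = Q := (posSemidef_psdSqrt hAε.posSemidef).1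
    have hRh : Rᴴ = R := (posSemidef_psdSqrt hBε.posSemidef).1
    have hQdet : IsUnit Q.det := by
      have h2 : Q.det * Q.det = Aε.det := by rw [← Matrix.det_mul, hQQ]
      have h3 := hAε.det_pos
      refine isUnit_iff_ne_zero.mpr fun h0 => ?_
      rw [h0, mul_zero] at h2
      rw [← h2] at h3
      exact lt_irrefl _ h3
    have hRdet : IsUnit R.det := by
      have h2 : R.det * R.det = Bε.det := by rw [← Matrix.det_mul, hRR]
      have h3 := hBε.det_pos
      refine isUnit_iff_ne_zero.mpr fun h0 => ?_
      rw [h0, mul_zero] at h2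
      rw [← h2] at h3
      exact lt_irrefl _ h3
    have hQinv : Q * Q⁻¹ = 1 := Matrix.mul_nonsing_inv Q hQdet
    have hQinv' : Q⁻¹ * Q = 1 := Matrix.nonsing_inv_mul Q hQdet
    have hRinv : R * R⁻¹ = 1 := Matrix.mul_nonsing_inv R hRdet
    have hRinv' : R⁻¹ * R = 1 := Matrix.nonsing_inv_mul R hRdet
    set K := Q⁻¹ * X * R⁻¹ with hKdef
    set Mm := R * Q * K with hMdef
    have hXf : Q * K * R = X := by
      rw [hKdef]
      calc Q * (Q⁻¹ * X * R⁻¹) * R = (Q * Q⁻¹) * X * (R⁻¹ * R) := by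
            simp only [Matrix.mul_assoc]
        _ = X := by rw [hQinv, hRinv', Matrix.one_mul, Matrix.mul_one]
    have hsim : Mm = R * X * R⁻¹ := by
      rw [hMdef, ← hXf]
      calc R * Q * K = R * (Q * K) * (R * R⁻¹) := by
            rw [hRinv, Matrix.mul_one, Matrix.mul_assoc]
        _ = R * (Q * K * R) * R⁻¹ := by simp only [Matrix.mul_assoc]
    have hchar : X.charpoly = Mm.charpoly := by
      rw [hsim]
      exact (charpoly_conj R R⁻¹ X hRinv).symm
    have step1 : L ≤ (Matrix.trace (Mmᴴ * Mm)).re := key_ineq X Mm hX hchar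
    have hKc : Kᴴ = R⁻¹ * Xᴴ * Q⁻¹ := by
      rw [hKdef, Matrix.conjTranspose_mul, Matrix.conjTranspose_mul,
        Matrix.conjTranspose_nonsing_inv, Matrix.conjTranspose_nonsing_inv, hQh, hRh,
        Matrix.mul_assoc]
    have hBinv : R⁻¹ * R⁻¹ = Bε⁻¹ := by rw [← Matrix.mul_inv_rev, hRR]
    have hKKc : 1 - K * Kᴴ = Q⁻¹ * (Aε - X * Bε⁻¹ * Xᴴ) * Q⁻¹ := by
      have h2 : K * Kᴴ = Q⁻¹ * (X * Bε⁻¹ * Xᴴ) * Q⁻¹ := by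
        rw [hKc, hKdef]
        calc Q⁻¹ * X * R⁻¹ * (R⁻¹ * Xᴴ * Q⁻¹)
            = Q⁻¹ * (X * ((R⁻¹ * R⁻¹) * Xᴴ)) * Q⁻¹ := by simp only [Matrix.mul_assoc]
          _ = Q⁻¹ * (X * Bε⁻¹ * Xᴴ) * Q⁻¹ := by rw [hBinv]; simp only [Matrix.mul_assoc]
      have h3 : Q⁻¹ * Aε * Q⁻¹ = 1 := by
        rw [← hQQ]
        calc Q⁻¹ * (Q * Q) * Q⁻¹ = (Q⁻¹ * Q) * (Q * Q⁻¹) := by simp only [Matrix.mul_assoc]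
          _ = 1 := by rw [hQinv', hQinv, Matrix.one_mul]
      rw [Matrix.mul_sub, Matrix.sub_mul, h2, h3]
    have hKK : (1 - K * Kᴴ).PosSemidef := by
      rw [hKKc]
      have h4 := hSchur.conjTranspose_mul_mul_same Q⁻¹
      have hQih : (Q⁻¹)ᴴ = Q⁻¹ := by rw [Matrix.conjTranspose_nonsing_inv, hQh]
      rwa [hQih] at h4
    have hMM : Mmᴴ * Mm = Kᴴ * (Q * Bε * Q) * K := by
      have hMc : Mmᴴ = Kᴴ * (Q * R) := by
        rw [hMdef, Matrix.conjTranspose_mul (R * Q) K, Matrix.conjTranspose_mul R Q, hQh, hRh]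
      rw [hMc, hMdef, ← hRR]
      calc Kᴴ * (Q * R) * (R * Q * K)
          = Kᴴ * (Q * (R * R) * Q) * K := by simp only [Matrix.mul_assoc]
        _ = Kᴴ * (Q * (R * R) * Q) * K := rfl
    have htr1 : Matrix.trace (Mmᴴ * Mm) = Matrix.trace ((Q * Bε * Q) * (K * Kᴴ)) := by
      rw [hMM, Matrix.trace_mul_cycle, Matrix.trace_mul_comm]
    have hQBQ : (Q * Bε * Q).PosSemidef := by
      have h5 := hBε.posSemidef.conjTranspose_mul_mul_same Q
      rwa [hQh] at h5
    have htr2 : (Matrix.trace (Mmᴴ * Mm)).re ≤ (Matrix.trace (Q * Bε * Q)).re := by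
      have h5 : 0 ≤ (Matrix.trace ((Q * Bε * Q) * (1 - K * Kᴴ))).re :=
        trace_mul_psd_nonneg hQBQ hKK
      have h6 : Matrix.trace ((Q * Bε * Q) * (1 - K * Kᴴ))
          = Matrix.trace (Q * Bε * Q) - Matrix.trace ((Q * Bε * Q) * (K * Kᴴ)) := by
        rw [Matrix.mul_sub, Matrix.mul_one, Matrix.trace_sub]
      rw [h6, Complex.sub_re] at h5
      rw [htr1]
      linarith
    have htr3 : Matrix.trace (Q * Bε * Q) = Matrix.trace (Aε * Bε) := by
      rw [Matrix.trace_mul_cycle, hQQ]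
    have hexp : (Matrix.trace (Aε * Bε)).re
        = (Matrix.trace (A * B)).re + ε * ((Matrix.trace A).re + (Matrix.trace B).re)
          + ε ^ 2 * n := by
      have hprod : Aε * Bε
          = (A * B + (ε : ℂ) • A) + ((ε : ℂ) • B + ((ε : ℂ) * (ε : ℂ)) • 1) := by
        rw [hAεdef, hBεdef, Matrix.add_mul, Matrix.mul_add, Matrix.mul_add]
        rw [Matrix.mul_smul, Matrix.mul_one, Matrix.smul_mul, Matrix.one_mul,
          Matrix.smul_mul, Matrix.mul_smul, Matrix.mul_one, smul_smul]
      rw [hprod]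
      simp only [Matrix.trace_add, Matrix.trace_smul, Matrix.trace_one, smul_eq_mul,
        Complex.add_re, Complex.mul_re, Complex.ofReal_re, Complex.ofReal_im,
        Complex.natCast_re, Complex.natCast_im, Fintype.card_fin]
      ring
    calc L ≤ (Matrix.trace (Mmᴴ * Mm)).re := step1
      _ ≤ (Matrix.trace (Q * Bε * Q)).re := htr2
      _ = (Matrix.trace (Aε * Bε)).re := by rw [htr3]
      _ = _ := hexp
  -- take ε → 0
  have hc0 : 0 ≤ (Matrix.trace A).re + (Matrix.trace B).re :=
    add_nonneg (trace_re_nonneg hA) (trace_re_nonneg hB)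
  refine le_of_forall_pos_le_add fun δ hδ => ?_
  set c := (Matrix.trace A).re + (Matrix.trace B).re with hcdef
  have hn0 : (0 : ℝ) ≤ n := Nat.cast_nonneg n
  have hcn : 0 < c + n + 1 := by positivity
  set ε := min 1 (δ / (c + n + 1)) with hεdef
  have hε1 : ε ≤ 1 := min_le_left _ _
  have hε2 : ε ≤ δ / (c + n + 1) := min_le_right _ _
  have hεpos : 0 < ε := lt_min one_pos (div_pos hδ hcn)
  have h := key ε hεpos
  have h7 : ε * (c + n + 1) ≤ δ := (le_div_iff₀ hcn).mp hε2
  have h8 : ε ^ 2 ≤ ε := by nlinarith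
  have h9 : ε ^ 2 * n ≤ ε * n := mul_le_mul_of_nonneg_right h8 hn0
  nlinarith [mul_le_mul_of_nonneg_right hε1 hn0]
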